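/- Let m > 1 and K > 0 be real constants, let h : [0,∞) → ℝ be continuous with |h(r)| ≤ K e^{(2−m)r} for all r ≥ 0, and let f : [0,∞) → ℝ be a C² function satisfying f''(r) − f(r) = h(r) for all r ≥ 0. Then the quantity α := (1/2)·(f(0) + f'(0) + ∫₀^∞ e^{-s} h(s) ds) is well defined (the integral converges absolutely), and there exists a constant c > 0 depending only on K, m, |f(0)| and |f'(0)| such that for all r ≥ 0: |f(r) − α e^{r}| ≤ c·ρ(r), where ρ(r) = e^{(2−m)r} if 1 < m < 3, ρ(r) = (r+1)e^{-r} if m = 3, and ρ(r) = e^{-r} if m > 3. -/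

import Mathlib

open Real MeasureTheory Set Filter intervalIntegral

lemma exp_mul_hasDeriv (b t : ℝ) : HasDerivAt (fun s => Real.exp (b * s)) (Real.exp (b * t) * b) t := by
  simpa using (((hasDerivAt_id t).const_mul b).exp)

lemma exp_mul_integrableOn_Ioi (a b : ℝ) (hb : b < 0) :
    IntegrableOn (fun s => Real.exp (b * s)) (Set.Ioi a) := by
  have := exp_neg_integrableOn_Ioi a (neg_pos.mpr hb)
  simpa using this

lemma integral_exp_mul_Ioi' (a b : ℝ) (hb : b < 0) :
    ∫ s in Set.Ioi a, Real.exp (b * s) = Real.exp (b * a) / (-b) := by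
  have hderiv : ∀ x ∈ Set.Ici a, HasDerivAt (fun s => Real.exp (b * s) / b) (Real.exp (b * x)) x := by
    intro x _
    have := (exp_mul_hasDeriv b x).div_const b
    simpa [mul_div_assoc, div_self hb.ne] using this
  have htend : Tendsto (fun s => Real.exp (b * s) / b) atTop (nhds 0) := by
    have h1 : Tendsto (fun s : ℝ => b * s) atTop atBot :=
      tendsto_id.const_mul_atTop_of_neg hb
    have := (tendsto_exp_atBot.comp h1).div_const b
    simpa using this
  have := integral_Ioi_of_hasDerivAt_of_tendsto' hderiv (exp_mul_integrableOn_Ioi a b hb) htend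
  rw [this]; ring

lemma integral_exp_mul_interval (r b : ℝ) (hb : b ≠ 0) :
    ∫ t in (0:ℝ)..r, Real.exp (b * t) = (Real.exp (b * r) - 1) / b := by
  have hderiv : ∀ x ∈ Set.uIcc (0:ℝ) r, HasDerivAt (fun s => Real.exp (b * s) / b) (Real.exp (b * x)) x := by
    intro x _
    have := (exp_mul_hasDeriv b x).div_const b
    simpa [mul_div_assoc, div_self hb] using this
  have hint : IntervalIntegrable (fun s => Real.exp (b * s)) volume 0 r :=
    (Real.continuous_exp.comp (continuous_const.mul continuous_id)).intervalIntegrable 0 r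
  have := intervalIntegral.integral_eq_sub_of_hasDerivAt hderiv hint
  rw [this]; simp [sub_div]

set_option maxHeartbeats 1000000 in
/-- The analytic core of Proposition 4.5 of the paper: if `f'' - f = h` on `[0,∞)` with
`|h(r)| ≤ K e^{(2-m)r}`, `m > 1`, then `f(r) - α e^r` decays with explicit rate, where
`α = (1/2)(f(0) + f'(0) + ∫₀^∞ e^{-s} h(s) ds)`, with a constant depending only on
`K`, `m`, `|f(0)|` and `|f'(0)|`. -/
theorem stmt5 (m K F0 F1 : ℝ) (hm : 1 < m) (hK : 0 < K) :
    ∃ c > (0:ℝ), ∀ f h : ℝ → ℝ, ContDiff ℝ 2 f → Continuous h →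
      (∀ r ≥ (0:ℝ), |h r| ≤ K * Real.exp ((2 - m) * r)) →
      (∀ r ≥ (0:ℝ), deriv (deriv f) r - f r = h r) →
      |f 0| ≤ F0 → |deriv f 0| ≤ F1 →
      IntegrableOn (fun s => Real.exp (-s) * h s) (Set.Ici (0:ℝ)) ∧
      ∀ r ≥ (0:ℝ),
        |f r - (1 / 2 * (f 0 + deriv f 0 + ∫ s in Set.Ici (0:ℝ), Real.exp (-s) * h s)) *
            Real.exp r| ≤
          c * (if m < 3 then Real.exp ((2 - m) * r)
               else if m = 3 then (r + 1) * Real.exp (-r)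
               else Real.exp (-r)) := by
  have hm1 : (0:ℝ) < m - 1 := by linarith
  set M : ℝ := K / (m - 1) with hMdef
  have hM : 0 < M := div_pos hK hm1
  set B : ℝ := if m < 3 then 1/(3-m) else if m = 3 then 1 else 1/(m-3) with hBdef
  have hB : 0 < B := by
    rw [hBdef]; split_ifs with h1 h2
    · exact div_pos one_pos (by linarith)
    · norm_num
    · exact div_pos one_pos (by linarith [lt_of_le_of_ne (not_lt.mp h1) (Ne.symm h2)])
  clear_value M B
  refine ⟨2*|F0| + |F1| + M + M * B + 1, by positivity, ?_⟩
  intro f h hf hh hhb hode hF0 hF1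
  -- regularity facts
  have h11 : ContDiff ℝ (1+1) f := by
    have e : ((1:WithTop ℕ∞)+1) = 2 := by norm_num
    rw [e]; exact hf
  have hdf : Differentiable ℝ f := hf.differentiable (by norm_num)
  have hcd' : ContDiff ℝ 1 (deriv f) := by
    have := (contDiff_succ_iff_deriv.mp h11).2.2
    exact_mod_cast this
  have hdf' : Differentiable ℝ (deriv f) := hcd'.differentiable one_ne_zero
  have hcf' : Continuous (deriv f) := hdf'.continuous
  have hcf'' : Continuous (deriv (deriv f)) := hcd'.continuous_deriv le_rfl
  set v : ℝ → ℝ := fun t => deriv f t + f t with hvdef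
  have hv_cont : Continuous v := hcf'.add hdf.continuous
  -- integrability
  have hbound_int : ∀ r : ℝ, IntegrableOn (fun s => K * Real.exp ((1-m)*s)) (Set.Ioi r) :=
    fun r => (exp_mul_integrableOn_Ioi r (1-m) (by linarith)).const_mul K
  have hg_int : ∀ r ≥ (0:ℝ), IntegrableOn (fun s => Real.exp (-s) * h s) (Set.Ioi r) := by
    intro r hr
    apply Integrable.mono' (hbound_int r)
      ((by fun_prop : Continuous fun s => Real.exp (-s) * h s).aestronglyMeasurable)
    filter_upwards [ae_restrict_mem measurableSet_Ioi] with s hs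
    have hs0 : (0:ℝ) ≤ s := le_trans hr (le_of_lt hs)
    have hb := hhb s hs0
    have habs : |h s| ≤ K * Real.exp ((2-m)*s) := hb
    have : ‖Real.exp (-s) * h s‖ = Real.exp (-s) * |h s| := by
      rw [norm_mul, Real.norm_eq_abs, Real.norm_eq_abs, abs_exp]
    rw [this]
    calc Real.exp (-s) * |h s| ≤ Real.exp (-s) * (K * Real.exp ((2-m)*s)) := by
          exact mul_le_mul_of_nonneg_left habs (exp_nonneg _)
      _ = K * (Real.exp (-s) * Real.exp ((2-m)*s)) := by ring
      _ = K * Real.exp ((1-m)*s) := by rw [← Real.exp_add]; ring_nf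
  have hIci : IntegrableOn (fun s => Real.exp (-s) * h s) (Set.Ici (0:ℝ)) := by
    rw [integrableOn_Ici_iff_integrableOn_Ioi]
    exact hg_int 0 le_rfl
  refine ⟨hIci, ?_⟩
  set R : ℝ → ℝ := fun r => ∫ s in Set.Ioi r, Real.exp (-s) * h s with hRdef
  have hR_bound : ∀ r ≥ (0:ℝ), |R r| ≤ M * Real.exp ((1-m)*r) := by
    intro r hr
    have h1 : ‖R r‖ ≤ ∫ s in Set.Ioi r, K * Real.exp ((1-m)*s) := by
      apply MeasureTheory.norm_integral_le_of_norm_le (hbound_int r)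
      filter_upwards [ae_restrict_mem measurableSet_Ioi] with s hs
      have hs0 : (0:ℝ) ≤ s := le_trans hr (le_of_lt hs)
      have habs := hhb s hs0
      rw [norm_mul, Real.norm_eq_abs, Real.norm_eq_abs, abs_exp]
      calc Real.exp (-s) * |h s| ≤ Real.exp (-s) * (K * Real.exp ((2-m)*s)) :=
            mul_le_mul_of_nonneg_left habs (exp_nonneg _)
        _ = K * (Real.exp (-s) * Real.exp ((2-m)*s)) := by ring
        _ = K * Real.exp ((1-m)*s) := by rw [← Real.exp_add]; ring_nf
    have h2 : ∫ s in Set.Ioi r, K * Real.exp ((1-m)*s) = M * Real.exp ((1-m)*r) := by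
      rw [MeasureTheory.integral_const_mul, integral_exp_mul_Ioi' r (1-m) (by linarith)]
      rw [hMdef]; field_simp
      rw [show 1 - m = -(m-1) by ring, div_neg, neg_neg, div_self hm1.ne']
    rw [Real.norm_eq_abs] at h1
    linarith [h1, h2.symm.le]
  -- FTC step 1
  have key1 : ∀ r ≥ (0:ℝ), Real.exp (-r) * v r - v 0 = ∫ t in (0:ℝ)..r, Real.exp (-t) * h t := by
    intro r hr
    have hd : ∀ t ∈ Set.uIcc (0:ℝ) r,
        HasDerivAt (fun s => Real.exp (-s) * v s) (Real.exp (-t) * h t) t := by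
      intro t ht
      have ht0 : 0 ≤ t := by rw [Set.uIcc_of_le hr] at ht; exact ht.1
      have hde : HasDerivAt (fun s : ℝ => Real.exp (-s)) (-Real.exp (-t)) t := by
        have := exp_mul_hasDeriv (-1) t
        simpa [neg_one_mul] using this
      have hdv : HasDerivAt v (deriv (deriv f) t + deriv f t) t :=
        ((hdf' t).hasDerivAt).add ((hdf t).hasDerivAt)
      have hmul := hde.mul hdv
      refine hmul.congr_deriv ?_
      have hot := hode t ht0
      simp only [hvdef]
      linear_combination Real.exp (-t) * hot
    have hint2 : IntervalIntegrable (fun t => Real.exp (-t) * h t) volume 0 r :=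
      ((Real.continuous_exp.comp continuous_neg).mul hh).intervalIntegrable 0 r
    have := intervalIntegral.integral_eq_sub_of_hasDerivAt hd hint2
    rw [this]; simp
  -- splitting
  have key2 : ∀ r ≥ (0:ℝ), ∫ t in (0:ℝ)..r, Real.exp (-t) * h t = R 0 - R r := by
    intro r hr
    rw [intervalIntegral.integral_of_le hr]
    have hu : Set.Ioi (0:ℝ) = Set.Ioc 0 r ∪ Set.Ioi r := (Set.Ioc_union_Ioi_eq_Ioi hr).symm
    have hsum := MeasureTheory.setIntegral_union (Set.Ioc_disjoint_Ioi le_rfl) measurableSet_Ioi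
      ((hg_int 0 le_rfl).mono_set Set.Ioc_subset_Ioi_self) (hg_int r hr)
      (f := fun s => Real.exp (-s) * h s) (μ := volume)
    have : R 0 = (∫ t in Set.Ioc (0:ℝ) r, Real.exp (-t) * h t) + R r := by
      rw [hRdef]; simp only; rw [hu, hsum]
    linarith
  set R0 : ℝ := ∫ s in Set.Ici (0:ℝ), Real.exp (-s) * h s with hR0def
  have hR0R : R0 = R 0 := by rw [hR0def, hRdef, MeasureTheory.integral_Ici_eq_integral_Ioi]
  set A : ℝ := 1 / 2 * (f 0 + deriv f 0 + R0) with hAdef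
  have key3 : ∀ r ≥ (0:ℝ), Real.exp (-r) * v r = 2*A - R r := by
    intro r hr
    have h1 := key1 r hr
    have h2 := key2 r hr
    have hv0 : v 0 = deriv f 0 + f 0 := rfl
    rw [hAdef, hR0R]
    linear_combination h1 + h2 + hv0
  -- FTC step 2
  have key4 : ∀ r ≥ (0:ℝ),
      Real.exp r * f r - A * Real.exp (2*r) - (f 0 - A)
        = ∫ t in (0:ℝ)..r, (Real.exp t * v t - 2*A*Real.exp (2*t)) := by
    intro r hr
    have hd : ∀ t ∈ Set.uIcc (0:ℝ) r,
        HasDerivAt (fun s => Real.exp s * f s - A * Real.exp (2*s))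
          (Real.exp t * v t - 2*A*Real.exp (2*t)) t := by
      intro t _
      have h1 : HasDerivAt (fun s => Real.exp s * f s)
          (Real.exp t * f t + Real.exp t * deriv f t) t :=
        (Real.hasDerivAt_exp t).mul ((hdf t).hasDerivAt)
      have h2 : HasDerivAt (fun s => A * Real.exp (2*s)) (A * (Real.exp (2*t) * 2)) t :=
        (exp_mul_hasDeriv 2 t).const_mul A
      have := h1.sub h2
      refine this.congr_deriv ?_
      simp only [hvdef]; ring
    have hint2 : IntervalIntegrable (fun t => Real.exp t * v t - 2*A*Real.exp (2*t)) volume 0 r := by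
      apply Continuous.intervalIntegrable
      fun_prop
    have := intervalIntegral.integral_eq_sub_of_hasDerivAt hd hint2
    rw [this]; simp
  -- pointwise identity for the integrand
  have key5 : ∀ t ≥ (0:ℝ),
      Real.exp t * v t - 2*A*Real.exp (2*t) = -(Real.exp (2*t) * R t) := by
    intro t ht
    have h3 := key3 t ht
    have e1 : Real.exp (2*t) * Real.exp (-t) = Real.exp t := by
      rw [← Real.exp_add]; ring_nf
    linear_combination Real.exp (2*t) * h3 - v t * e1
  -- main bound on the integral
  have key6 : ∀ r ≥ (0:ℝ),
      |∫ t in (0:ℝ)..r, (Real.exp t * v t - 2*A*Real.exp (2*t))|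
        ≤ M * ∫ t in (0:ℝ)..r, Real.exp ((3-m)*t) := by
    intro r hr
    have hcont : Continuous (fun t => Real.exp t * v t - 2*A*Real.exp (2*t)) := by fun_prop
    have h1 : |∫ t in (0:ℝ)..r, (Real.exp t * v t - 2*A*Real.exp (2*t))|
        ≤ ∫ t in (0:ℝ)..r, |Real.exp t * v t - 2*A*Real.exp (2*t)| := by
      have := intervalIntegral.norm_integral_le_integral_norm
        (f := fun t => Real.exp t * v t - 2*A*Real.exp (2*t)) (μ := volume) hr
      simpa [Real.norm_eq_abs] using this
    have h2 : ∫ t in (0:ℝ)..r, |Real.exp t * v t - 2*A*Real.exp (2*t)|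
        ≤ ∫ t in (0:ℝ)..r, M * Real.exp ((3-m)*t) := by
      apply intervalIntegral.integral_mono_on hr
      · exact (hcont.abs).intervalIntegrable 0 r
      · exact (continuous_const.mul (Real.continuous_exp.comp (by fun_prop))).intervalIntegrable 0 r
      · intro t htt
        rw [key5 t htt.1, abs_neg, abs_mul, abs_exp]
        calc Real.exp (2*t) * |R t| ≤ Real.exp (2*t) * (M * Real.exp ((1-m)*t)) :=
              mul_le_mul_of_nonneg_left (hR_bound t htt.1) (exp_nonneg _)
          _ = M * (Real.exp (2*t) * Real.exp ((1-m)*t)) := by ring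
          _ = M * Real.exp ((3-m)*t) := by rw [← Real.exp_add]; ring_nf
    calc _ ≤ _ := h1
      _ ≤ _ := h2
      _ = M * ∫ t in (0:ℝ)..r, Real.exp ((3-m)*t) := by
          rw [intervalIntegral.integral_const_mul]
  -- bound on |f 0 - A|
  have hF0' : 0 ≤ F0 := le_trans (abs_nonneg _) hF0
  have hF1' : 0 ≤ F1 := le_trans (abs_nonneg _) hF1
  have hR0b : |R0| ≤ M := by
    have := hR_bound 0 le_rfl
    simpa [hR0R] using this
  have hW : |f 0 - A| ≤ 2*|F0| + |F1| + M := by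
    have hA : |A| ≤ (F0 + F1 + M)/2 := by
      rw [hAdef, abs_mul]
      have : |f 0 + deriv f 0 + R0| ≤ F0 + F1 + M := by
        calc |f 0 + deriv f 0 + R0| ≤ |f 0 + deriv f 0| + |R0| := abs_add_le _ _
          _ ≤ |f 0| + |deriv f 0| + |R0| := by linarith [abs_add_le (f 0) (deriv f 0)]
          _ ≤ F0 + F1 + M := by linarith
      rw [abs_of_nonneg (by norm_num : (0:ℝ) ≤ (1:ℝ)/2)]
      linarith
    have hFa : F0 ≤ |F0| := le_abs_self _
    have hFb : F1 ≤ |F1| := le_abs_self _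
    calc |f 0 - A| ≤ |f 0| + |A| := abs_sub _ _
      _ ≤ F0 + (F0 + F1 + M)/2 := by linarith
      _ ≤ 2*|F0| + |F1| + M := by linarith
  -- final estimate
  intro r hr
  set J : ℝ := ∫ t in (0:ℝ)..r, Real.exp ((3-m)*t) with hJdef
  have hJnn : 0 ≤ J := by
    rw [hJdef]
    apply intervalIntegral.integral_nonneg hr
    intro t _; exact (exp_nonneg _)
  have habs : |f r - A * Real.exp r| ≤ Real.exp (-r) * (|f 0 - A| + M * J) := by
    have h4 := key4 r hr
    have h6 := key6 r hr
    have he : Real.exp (-r) * Real.exp r = 1 := by rw [← Real.exp_add]; simp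
    have he2 : Real.exp (-r) * Real.exp (2*r) = Real.exp r := by
      rw [← Real.exp_add]; ring_nf
    have e2 : f r - A * Real.exp r
        = Real.exp (-r) * ((f 0 - A) + ∫ t in (0:ℝ)..r, (Real.exp t * v t - 2*A*Real.exp (2*t))) := by
      linear_combination Real.exp (-r) * h4 - f r * he + A * he2
    rw [e2, abs_mul, abs_of_nonneg (exp_nonneg (-r))]
    apply mul_le_mul_of_nonneg_left _ (exp_nonneg _)
    calc |f 0 - A + ∫ t in (0:ℝ)..r, (Real.exp t * v t - 2*A*Real.exp (2*t))|
        ≤ |f 0 - A| + |∫ t in (0:ℝ)..r, (Real.exp t * v t - 2*A*Real.exp (2*t))| := abs_add_le _ _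
      _ ≤ |f 0 - A| + M * J := by linarith [h6]
  rcases lt_trichotomy m 3 with h3 | h3 | h3
  · -- case m < 3
    rw [if_pos h3]
    have hB3 : B = 1/(3-m) := by rw [hBdef, if_pos h3]
    have hJ : J = (Real.exp ((3-m)*r) - 1)/(3-m) := by
      rw [hJdef]; exact integral_exp_mul_interval r (3-m) (by linarith)
    have hJle : J ≤ Real.exp ((3-m)*r)/(3-m) := by
      rw [hJ]
      gcongr
      · linarith
    have hexp1 : Real.exp (-r) ≤ Real.exp ((2-m)*r) := Real.exp_le_exp.mpr (by nlinarith)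
    have hexp2 : Real.exp (-r) * Real.exp ((3-m)*r) = Real.exp ((2-m)*r) := by
      rw [← Real.exp_add]; ring_nf
    calc |f r - A * Real.exp r| ≤ Real.exp (-r) * (|f 0 - A| + M * J) := habs
      _ ≤ Real.exp (-r) * |f 0 - A| + Real.exp (-r) * (M * (Real.exp ((3-m)*r)/(3-m))) := by
          have t0 : M * J ≤ M * (Real.exp ((3-m)*r)/(3-m)) :=
            mul_le_mul_of_nonneg_left hJle hM.le
          have := mul_le_mul_of_nonneg_left t0 (exp_nonneg (-r))
          nlinarith [this]
      _ = Real.exp (-r) * |f 0 - A| + (M/(3-m)) * Real.exp ((2-m)*r) := by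
          linear_combination (M/(3-m)) * hexp2
      _ ≤ (2*|F0| + |F1| + M) * Real.exp ((2-m)*r) + (M*B) * Real.exp ((2-m)*r) := by
          have t2 : Real.exp (-r) * |f 0 - A| ≤ Real.exp ((2-m)*r) * (2*|F0| + |F1| + M) :=
            mul_le_mul hexp1 hW (abs_nonneg _) (exp_nonneg _)
          have t3 : M/(3-m) = M*B := by rw [hB3]; ring
          have t4 : (M/(3-m)) * Real.exp ((2-m)*r) = (M*B) * Real.exp ((2-m)*r) := by rw [t3]
          linarith [t2, t4]
      _ ≤ (2*|F0| + |F1| + M + M * B + 1) * Real.exp ((2-m)*r) := by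
          nlinarith [Real.exp_pos ((2-m)*r)]
  · -- case m = 3
    rw [if_neg (show ¬ m < 3 by simp [h3]), if_pos h3]
    have hB3 : B = 1 := by rw [hBdef, if_neg (show ¬ m < 3 by simp [h3]), if_pos h3]
    have hJ : J = r := by
      rw [hJdef, h3]
      norm_num
    have hstep : |f 0 - A| + M * J ≤ (2*|F0| + |F1| + M + M * B + 1) * (r + 1) := by
      rw [hJ, hB3]
      nlinarith [hW, hM.le, hr, abs_nonneg (f 0 - A), hF0', hF1', abs_nonneg F0, abs_nonneg F1]
    calc |f r - A * Real.exp r| ≤ Real.exp (-r) * (|f 0 - A| + M * J) := habs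
      _ ≤ Real.exp (-r) * ((2*|F0| + |F1| + M + M * B + 1) * (r + 1)) :=
          mul_le_mul_of_nonneg_left hstep (exp_nonneg _)
      _ = (2*|F0| + |F1| + M + M * B + 1) * ((r + 1) * Real.exp (-r)) := by ring
  · -- case m > 3
    rw [if_neg (not_lt.mpr h3.le), if_neg (ne_of_gt h3)]
    have hB3 : B = 1/(m-3) := by
      rw [hBdef, if_neg (not_lt.mpr h3.le), if_neg (ne_of_gt h3)]
    have hJ : J = (Real.exp ((3-m)*r) - 1)/(3-m) := by
      rw [hJdef]; exact integral_exp_mul_interval r (3-m) (by linarith)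
    have hexp01 : Real.exp ((3-m)*r) ≤ 1 := by
      rw [show (1:ℝ) = Real.exp 0 by simp]
      exact Real.exp_le_exp.mpr (by nlinarith)
    have hJle : J ≤ 1/(m-3) := by
      rw [hJ, show (Real.exp ((3-m)*r) - 1)/(3-m) = (1 - Real.exp ((3-m)*r))/(m-3) from by
        rw [div_eq_div_iff (by linarith) (by linarith)]; ring]
      gcongr
      · linarith [exp_nonneg ((3-m)*r)]
    have hstep : |f 0 - A| + M * J ≤ 2*|F0| + |F1| + M + M * B + 1 := by
      have : M * J ≤ M * (1/(m-3)) := mul_le_mul_of_nonneg_left hJle hM.le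
      rw [hB3]
      nlinarith [hW]
    calc |f r - A * Real.exp r| ≤ Real.exp (-r) * (|f 0 - A| + M * J) := habs
      _ ≤ Real.exp (-r) * (2*|F0| + |F1| + M + M * B + 1) :=
          mul_le_mul_of_nonneg_left hstep (exp_nonneg _)
      _ = (2*|F0| + |F1| + M + M * B + 1) * Real.exp (-r) := by ring
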